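/- Let α, β > 0, (v, θ, ω) ∈ ℝ³, ω_d ∈ ℝ, s₁ ∈ {−1,1}, s₃ = −s₁, and let s₂ ∈ {−1,1} satisfy s₂·v = −|v|. Suppose Δ := 2ω² + 2ω_d² + α²v²/β² − 4s₁αθ ≥ 0, and let ε ∈ {−1,1}. Define t₁ = (−(2ω + s₁α|v|/β) + ε√Δ)/(2s₁α), t₃ = (−(2ω_d + s₁α|v|/β) + ε√Δ)/(2s₁α), and t₂ = |v|/β. Then the general three-phase final state from (v, θ, ω) with durations t₁, t₂, t₃ and signs s₁, s₂, s₃ equals (0, 0, ω_d). -/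

import Mathlib

/-- The general three-phase final state `(v_f, θ_f, ω_f)`: angular acceleration `s₁ * α`
for time `t₁`, linear acceleration `s₂ * β` for time `t₂`, angular acceleration
`s₃ * α` for time `t₃`. -/
noncomputable def threePhaseFinal (α β v θ ω t₁ t₂ t₃ s₁ s₂ s₃ : ℝ) : ℝ × ℝ × ℝ :=
  (v + s₂ * β * t₂,
   θ + ω * t₁ + s₁ * α * t₁ ^ 2 / 2 + (ω + s₁ * α * t₁) * (t₂ + t₃) + s₃ * α * t₃ ^ 2 / 2,
   ω + s₁ * α * t₁ + s₃ * α * t₃)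

theorem stmt13 (α β v θ ω ωd : ℝ) (hα : 0 < α) (hβ : 0 < β)
    (s₁ s₂ s₃ : ℝ) (hs₁ : s₁ = -1 ∨ s₁ = 1) (hs₃ : s₃ = -s₁)
    (hs₂ : s₂ = -1 ∨ s₂ = 1) (hs₂v : s₂ * v = -|v|)
    (Δ : ℝ) (hΔdef : Δ = 2 * ω ^ 2 + 2 * ωd ^ 2 + α ^ 2 * v ^ 2 / β ^ 2 - 4 * s₁ * α * θ)
    (hΔ : 0 ≤ Δ)
    (ε : ℝ) (hε : ε = -1 ∨ ε = 1)
    (t₁ t₂ t₃ : ℝ)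
    (ht₁ : t₁ = (-(2 * ω + s₁ * α * |v| / β) + ε * Real.sqrt Δ) / (2 * s₁ * α))
    (ht₃ : t₃ = (-(2 * ωd + s₁ * α * |v| / β) + ε * Real.sqrt Δ) / (2 * s₁ * α))
    (ht₂ : t₂ = |v| / β) :
    threePhaseFinal α β v θ ω t₁ t₂ t₃ s₁ s₂ s₃ = (0, 0, ωd) := by
  have hαne : α ≠ 0 := hα.ne'
  have hβne : β ≠ 0 := hβ.ne'
  have hs1sq : s₁ ^ 2 = 1 := by rcases hs₁ with h | h <;> rw [h] <;> norm_num
  have hs1ne : s₁ ≠ 0 := by rcases hs₁ with h | h <;> rw [h] <;> norm_num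
  have hεsq : ε ^ 2 = 1 := by rcases hε with h | h <;> rw [h] <;> norm_num
  have hr : Real.sqrt Δ ^ 2 = Δ := Real.sq_sqrt hΔ
  have hv2 : |v| ^ 2 = v ^ 2 := sq_abs v
  have habs : s₂ * |v| = -v := by
    rcases hs₂ with h | h <;> rw [h] at hs₂v ⊢ <;> linarith
  have hx2 : β ^ 2 * (ε * Real.sqrt Δ) ^ 2 =
      (2 * ω ^ 2 + 2 * ωd ^ 2) * β ^ 2 + α ^ 2 * v ^ 2 - 4 * s₁ * α * θ * β ^ 2 := by
    rw [mul_pow, hεsq, hr, hΔdef]; field_simp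
  have hv2' : s₁ ^ 2 * |v| ^ 2 = v ^ 2 := by rw [hs1sq, hv2, one_mul]
  subst ht₁ ht₂ ht₃ hs₃
  simp only [threePhaseFinal, Prod.mk.injEq]
  refine ⟨by field_simp; linear_combination habs, ?_, by field_simp; ring⟩
  field_simp
  linear_combination 2 * hx2 - 2 * α ^ 2 * hv2'
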